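/- (Abstract necessity, Beurling case.) Let λ_ℓ ≥ 0 be non-decreasing with λ_0 = 0, and 𝓜 : [0,∞) → ℝ non-decreasing with 𝓜(0) = 0. Suppose that for all positive constants K, r, C there exists ℓ > C with m(σ(ℓ)) < K exp(−𝓜(r λ_ℓ)). Then there exist a strictly increasing sequence of indices (ℓ_k)_{k≥1} and unit vectors v_{ℓ_k} ∈ V_{ℓ_k} with ‖σ(ℓ_k) v_{ℓ_k}‖ < exp(−𝓜(k λ_{ℓ_k})) for every k ∈ ℕ. Moreover, for the sequence u defined by u_{ℓ_k} = v_{ℓ_k} and u_ℓ = 0 otherwise: (i) ‖u_ℓ‖ ≤ exp(𝓜(λ_ℓ)) for all ℓ; (ii) ‖u_{ℓ_k}‖ = 1 for all k; (iii) for every L > 0 there is C_L > 0 with ‖σ(ℓ) u_ℓ‖ ≤ C_L exp(−𝓜(L λ_ℓ)) for all ℓ. -/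
import Mathlib


/-- Abstract necessity, Beurling case. -/
theorem stmt_10 (lam : ℕ → ℝ) (hlam0 : ∀ ℓ, 0 ≤ lam ℓ)
    (hlammono : Monotone lam) (hlamzero : lam 0 = 0)
    (hlamtop : Filter.Tendsto lam Filter.atTop Filter.atTop)
    (MM : ℝ → ℝ) (hMMmono : MonotoneOn MM (Set.Ici 0)) (hMM0 : MM 0 = 0)
    (hMMnn : ∀ t : ℝ, 0 ≤ t → 0 ≤ MM t)
    (V : ℕ → Type*) [∀ ℓ, NormedAddCommGroup (V ℓ)]
    [∀ ℓ, InnerProductSpace ℂ (V ℓ)] [∀ ℓ, FiniteDimensional ℂ (V ℓ)]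
    [∀ ℓ, Nontrivial (V ℓ)]
    (σ : ∀ ℓ, V ℓ →L[ℂ] V ℓ) (mσ : ℕ → ℝ)
    (hmσ : ∀ ℓ, mσ ℓ = sInf {r : ℝ | ∃ v : V ℓ, ‖v‖ = 1 ∧ r = ‖σ ℓ v‖})
    (hfail : ∀ K r C : ℝ, 0 < K → 0 < r → 0 < C →
      ∃ ℓ : ℕ, C < (ℓ : ℝ) ∧ mσ ℓ < K * Real.exp (-(MM (r * lam ℓ)))) :
    ∃ e : ℕ → ℕ, StrictMono e ∧
      ∃ v : ∀ k, V (e k),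
        (∀ k : ℕ, 1 ≤ k → ‖v k‖ = 1) ∧
        (∀ k : ℕ, 1 ≤ k →
          ‖σ (e k) (v k)‖ < Real.exp (-(MM ((k : ℝ) * lam (e k))))) ∧
        ∃ u : ∀ ℓ, V ℓ,
          (∀ k : ℕ, 1 ≤ k → u (e k) = v k) ∧
          (∀ ℓ, (∀ k : ℕ, 1 ≤ k → ℓ ≠ e k) → u ℓ = 0) ∧
          (∀ ℓ, ‖u ℓ‖ ≤ Real.exp (MM (lam ℓ))) ∧
          (∀ k : ℕ, 1 ≤ k → ‖u (e k)‖ = 1) ∧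
          (∀ L : ℝ, 0 < L → ∃ CL : ℝ, 0 < CL ∧
            ∀ ℓ, ‖σ ℓ (u ℓ)‖ ≤ CL * Real.exp (-(MM (L * lam ℓ)))) := by
  classical
  -- every V ℓ contains a unit vector
  have hunit : ∀ ℓ : ℕ, ∃ w : V ℓ, ‖w‖ = 1 := by
    intro ℓ
    obtain ⟨x, hx⟩ := exists_ne (0 : V ℓ)
    exact ⟨‖x‖⁻¹ • x, norm_smul_inv_norm hx⟩
  have key : ∀ (n k : ℕ), ∃ p : Σ ℓ : ℕ, V ℓ, n < p.1 ∧ ‖p.2‖ = 1 ∧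
      ‖σ p.1 p.2‖ < Real.exp (-(MM (((k : ℝ) + 1) * lam p.1))) := by
    intro n k
    obtain ⟨ℓ, hℓ1, hℓ2⟩ := hfail 1 ((k : ℝ) + 1) ((n : ℝ) + 1) one_pos
      (by positivity) (by positivity)
    rw [hmσ, one_mul] at hℓ2
    have hne : {r : ℝ | ∃ v : V ℓ, ‖v‖ = 1 ∧ r = ‖σ ℓ v‖}.Nonempty := by
      obtain ⟨w, hw⟩ := hunit ℓ
      exact ⟨‖σ ℓ w‖, w, hw, rfl⟩
    obtain ⟨r, ⟨w, hw1, rfl⟩, hr⟩ := exists_lt_of_csInf_lt hne hℓ2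
    have hn : n < ℓ := by exact_mod_cast lt_trans (by linarith : (n : ℝ) < (n : ℝ) + 1) hℓ1
    exact ⟨⟨ℓ, w⟩, hn, hw1, hr⟩
  choose F hF1 hF2 hF3 using key
  have hex : ∃ g : ℕ → Σ ℓ : ℕ, V ℓ, ∀ k : ℕ,
      (g k).1 < (g (k + 1)).1 ∧ ‖(g (k + 1)).2‖ = 1 ∧
      ‖σ (g (k + 1)).1 (g (k + 1)).2‖ <
        Real.exp (-(MM (((k : ℝ) + 1) * lam (g (k + 1)).1))) := by
    refine ⟨fun k => Nat.rec (motive := fun _ => Σ ℓ : ℕ, V ℓ) ⟨0, 0⟩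
      (fun k p => F p.1 k) k, fun k => ?_⟩
    exact ⟨hF1 _ _, hF2 _ _, hF3 _ _⟩
  obtain ⟨g, hg⟩ := hex
  set e : ℕ → ℕ := fun k => (g k).1 with he_def
  set v : ∀ k, V (e k) := fun k => (g k).2 with hv_def
  have he : StrictMono e := strictMono_nat_of_lt_succ fun k => (hg k).1
  have hv1 : ∀ k : ℕ, 1 ≤ k → ‖v k‖ = 1 := by
    intro k hk
    match k, hk with
    | (j + 1), _ => exact (hg j).2.1
  have hv2 : ∀ k : ℕ, 1 ≤ k → ‖σ (e k) (v k)‖ < Real.exp (-(MM ((k : ℝ) * lam (e k)))) := by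
    intro k hk
    match k, hk with
    | (j + 1), _ =>
      have := (hg j).2.2
      push_cast
      convert this using 4 <;> push_cast <;> ring
  set u : ∀ ℓ, V ℓ := fun ℓ =>
    if h : ∃ k : ℕ, 1 ≤ k ∧ e k = ℓ then
      cast (congrArg V h.choose_spec.2) (v h.choose) else 0 with hu_def
  have hue : ∀ k : ℕ, 1 ≤ k → u (e k) = v k := by
    intro k hk
    have h : ∃ k' : ℕ, 1 ≤ k' ∧ e k' = e k := ⟨k, hk, rfl⟩
    have hkk : h.choose = k := he.injective h.choose_spec.2
    show (if h : ∃ k' : ℕ, 1 ≤ k' ∧ e k' = e k then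
        cast (congrArg V h.choose_spec.2) (v h.choose) else 0) = v k
    rw [dif_pos h]
    refine eq_of_heq ((cast_heq _ _).trans ?_)
    rw [hkk]
  have hu0 : ∀ ℓ, (∀ k : ℕ, 1 ≤ k → ℓ ≠ e k) → u ℓ = 0 := by
    intro ℓ hℓ
    have h : ¬∃ k : ℕ, 1 ≤ k ∧ e k = ℓ := by
      rintro ⟨k, hk, hek⟩
      exact hℓ k hk hek.symm
    show (if h : ∃ k : ℕ, 1 ≤ k ∧ e k = ℓ then
        cast (congrArg V h.choose_spec.2) (v h.choose) else 0) = 0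
    rw [dif_neg h]
  refine ⟨e, he, v, hv1, hv2, u, hue, hu0, ?_, ?_, ?_⟩
  · -- ‖u ℓ‖ ≤ exp (MM (lam ℓ))
    intro ℓ
    have hexp : (1 : ℝ) ≤ Real.exp (MM (lam ℓ)) :=
      Real.one_le_exp (hMMnn _ (hlam0 ℓ))
    by_cases h : ∃ k : ℕ, 1 ≤ k ∧ e k = ℓ
    · obtain ⟨k, hk, rfl⟩ := h
      rw [hue k hk, hv1 k hk]
      exact hexp
    · have : u ℓ = 0 := by
        refine hu0 ℓ ?_
        intro k hk hek
        exact h ⟨k, hk, hek.symm⟩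
      rw [this, norm_zero]
      linarith
  · intro k hk
    rw [hue k hk]
    exact hv1 k hk
  · -- decay estimate
    intro L hL
    set N : ℕ := ⌈L⌉₊ with hN
    set CL : ℝ := 1 + ∑ k ∈ Finset.range (N + 1),
      ‖σ (e k) (v k)‖ * Real.exp (MM (L * lam (e k))) with hCL
    have hsum_nonneg : (0 : ℝ) ≤ ∑ k ∈ Finset.range (N + 1),
        ‖σ (e k) (v k)‖ * Real.exp (MM (L * lam (e k))) := by
      apply Finset.sum_nonneg
      intro i _
      positivity
    have hCL1 : (1 : ℝ) ≤ CL := by rw [hCL]; linarith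
    have hCLpos : (0 : ℝ) < CL := by linarith
    refine ⟨CL, hCLpos, ?_⟩
    intro ℓ
    by_cases h : ∃ k : ℕ, 1 ≤ k ∧ e k = ℓ
    · obtain ⟨k, hk, rfl⟩ := h
      rw [hue k hk]
      by_cases hkN : k ≤ N
      · have hmem : k ∈ Finset.range (N + 1) := Finset.mem_range.2 (by omega)
        have hsingle : ‖σ (e k) (v k)‖ * Real.exp (MM (L * lam (e k))) ≤
            ∑ j ∈ Finset.range (N + 1),
              ‖σ (e j) (v j)‖ * Real.exp (MM (L * lam (e j))) := by
          apply Finset.single_le_sum (fun i _ => by positivity) hmem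
        have h1 : ‖σ (e k) (v k)‖ * Real.exp (MM (L * lam (e k))) ≤ CL := by
          rw [hCL]; linarith
        calc ‖σ (e k) (v k)‖
            = (‖σ (e k) (v k)‖ * Real.exp (MM (L * lam (e k)))) *
              Real.exp (-(MM (L * lam (e k)))) := by
              rw [mul_assoc, ← Real.exp_add, add_neg_cancel, Real.exp_zero, mul_one]
          _ ≤ CL * Real.exp (-(MM (L * lam (e k)))) :=
              mul_le_mul_of_nonneg_right h1 (Real.exp_pos _).le
      · have hLk : L ≤ (k : ℝ) := by
          refine le_trans (Nat.le_ceil L) ?_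
          exact_mod_cast Nat.le_of_lt (by omega : N < k)
        have hmm : MM (L * lam (e k)) ≤ MM ((k : ℝ) * lam (e k)) := by
          refine hMMmono ?_ ?_ (mul_le_mul_of_nonneg_right hLk (hlam0 _))
          · exact Set.mem_Ici.2 (mul_nonneg hL.le (hlam0 _))
          · exact Set.mem_Ici.2 (mul_nonneg (by positivity) (hlam0 _))
        calc ‖σ (e k) (v k)‖
            ≤ Real.exp (-(MM ((k : ℝ) * lam (e k)))) := (hv2 k hk).le
          _ ≤ Real.exp (-(MM (L * lam (e k)))) := Real.exp_le_exp.2 (by linarith)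
          _ ≤ CL * Real.exp (-(MM (L * lam (e k)))) :=
              le_mul_of_one_le_left (Real.exp_pos _).le hCL1
    · have hz : u ℓ = 0 := by
        refine hu0 ℓ ?_
        intro k hk hek
        exact h ⟨k, hk, hek.symm⟩
      rw [hz, map_zero, norm_zero]
      positivity
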